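/- Let an untyped deterministic calculus be convergence-admissible with respect to 𝒬. Then the inductively defined preorder and 𝒬-similarity coincide: ≤_𝒬 = ≼, i.e. for all expressions s1, s2, s1 ≤_𝒬 s2 if and only if s1 ≼ s2. -/

import Mathlib

/-! Untyped deterministic calculi (Schmidt-Schauß, Sabel, Machkasova):
an untyped deterministic calculus consists of expressions `E`, a deterministic
small-step reduction given as a partial function `step`, a set `Ans` of answers
(each irreducible), and a set `Q` of functions on expressions. -/

universe u

structure UDC : Type (u+1) where
  E : Type u
  step : E → Option E
  Ans : Set E
  ans_irred : ∀ a ∈ Ans, step a = none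
  Q : Set (E → E)

namespace UDC

variable (D : UDC)

/-- one-step reduction relation -/
def Red (s t : D.E) : Prop := D.step s = some t

/-- `s` converges to the answer `v` -/
def convTo (s v : D.E) : Prop := Relation.ReflTransGen D.Red s v ∧ v ∈ D.Ans

/-- `s` converges -/
def conv (s : D.E) : Prop := ∃ v, D.convTo s v

/-- the `Q`-experiment operator on binary relations on expressions -/
def F (η : D.E → D.E → Prop) (s t : D.E) : Prop :=
  ∀ v1, D.convTo s v1 → ∃ v2, D.convTo t v2 ∧ ∀ Qf ∈ D.Q, η (Qf v1) (Qf v2)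

/-- greatest fixpoint of a (monotone) operator on relations:
the union of all post-fixed points -/
def gfpRel {α : Type u} (F : (α → α → Prop) → (α → α → Prop)) (a b : α) : Prop :=
  ∃ η, (∀ x y, η x y → F η x y) ∧ η a b

/-- `Q`-similarity: the greatest fixpoint of the experiment operator -/
def sim : D.E → D.E → Prop := gfpRel D.F

/-- `Q1 (Q2 (… (Qn s)))` -/
def applyAll (l : List (D.E → D.E)) (s : D.E) : D.E := l.foldr (fun f e => f e) s

/-- the inductively defined preorder `≤_Q` -/
def leQ (s t : D.E) : Prop :=
  ∀ l : List (D.E → D.E), (∀ f ∈ l, f ∈ D.Q) →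
    D.conv (D.applyAll l s) → D.conv (D.applyAll l t)

/-- convergence admissibility w.r.t. `Q` -/
def admissible : Prop :=
  ∀ f ∈ D.Q, ∀ s v, D.convTo (f s) v ↔ ∃ v', D.convTo s v' ∧ D.convTo (f v') v

end UDC

section Aux

variable {D : UDC}

/-- determinism: answers reached are unique -/
lemma UDC.ans_uniq {s v x : D.E} (h1 : Relation.ReflTransGen D.Red s v)
    (hv : v ∈ D.Ans) (h2 : Relation.ReflTransGen D.Red s x) (hx : x ∈ D.Ans) :
    x = v := by
  induction h1 using Relation.ReflTransGen.head_induction_on with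
  | refl =>
    rcases h2.cases_head with rfl | ⟨y, hy, _⟩
    · rfl
    · exact absurd hy (by simp [UDC.Red, D.ans_irred v hv])
  | head hstep _ ih =>
    rename_i a c _
    rcases h2.cases_head with rfl | ⟨y, hy, hyx⟩
    · exact absurd hstep (by simp [UDC.Red, D.ans_irred _ hx])
    · have hyc : y = c := Option.some.inj (hy.symm.trans hstep)
      exact ih (hyc ▸ hyx)

lemma UDC.convTo_uniq {s v x : D.E} (h1 : D.convTo s v) (h2 : D.convTo s x) :
    x = v :=
  UDC.ans_uniq h1.1 h1.2 h2.1 h2.2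

/-- `sim` is a post-fixed point of `F` -/
lemma UDC.sim_postfix {s t : D.E} (h : D.sim s t) : D.F D.sim s t := by
  obtain ⟨η, hη, hst⟩ := h
  intro v1 hv1
  obtain ⟨v2, hv2, hQ⟩ := hη s t hst v1 hv1
  exact ⟨v2, hv2, fun Qf hQf => ⟨η, hη, hQ Qf hQf⟩⟩

/-- with admissibility, convergence of `applyAll l s` matches that of
`applyAll l v` when `s ↓ v` -/
lemma UDC.convTo_applyAll (hadm : D.admissible) (l : List (D.E → D.E))
    (hl : ∀ f ∈ l, f ∈ D.Q) {s v : D.E} (hsv : D.convTo s v) (x : D.E) :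
    D.convTo (D.applyAll l s) x ↔ D.convTo (D.applyAll l v) x := by
  induction l generalizing x with
  | nil =>
    simp only [UDC.applyAll, List.foldr_nil]
    constructor
    · intro hx
      have := D.convTo_uniq hsv hx
      subst this
      exact ⟨Relation.ReflTransGen.refl, hsv.2⟩
    · intro hx
      have : x = v := UDC.ans_uniq (Relation.ReflTransGen.refl) hsv.2 hx.1 hx.2
      subst this
      exact hsv
  | cons f l ih =>
    have hf : f ∈ D.Q := hl f List.mem_cons_self
    have hl' : ∀ g ∈ l, g ∈ D.Q := fun g hg => hl g (List.mem_cons_of_mem f hg)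
    simp only [UDC.applyAll, List.foldr_cons] at *
    rw [hadm f hf _ x, hadm f hf _ x]
    constructor
    · rintro ⟨v', hv', hfv⟩
      exact ⟨v', (ih hl' v').mp hv', hfv⟩
    · rintro ⟨v', hv', hfv⟩
      exact ⟨v', (ih hl' v').mpr hv', hfv⟩

/-- key lemma: similarity propagates through experiments -/
lemma UDC.sim_applyAll (hadm : D.admissible) (l : List (D.E → D.E))
    (hl : ∀ f ∈ l, f ∈ D.Q) {s t : D.E} (hst : D.sim s t) {v : D.E}
    (hv : D.convTo (D.applyAll l s) v) :
    ∃ w, D.convTo (D.applyAll l t) w ∧ ∀ Qf ∈ D.Q, D.sim (Qf v) (Qf w) := by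
  induction l generalizing v with
  | nil => exact D.sim_postfix hst v hv
  | cons f l ih =>
    have hf : f ∈ D.Q := hl f List.mem_cons_self
    have hl' : ∀ g ∈ l, g ∈ D.Q := fun g hg => hl g (List.mem_cons_of_mem f hg)
    simp only [UDC.applyAll, List.foldr_cons] at *
    obtain ⟨v', hv', hfv⟩ := (hadm f hf _ v).mp hv
    obtain ⟨w', hw', hQ⟩ := ih hl' hv'
    have hsim : D.sim (f v') (f w') := hQ f hf
    obtain ⟨w, hw, hQ'⟩ := D.sim_postfix hsim v hfv
    exact ⟨w, (hadm f hf _ w).mpr ⟨w', hw', hw⟩, hQ'⟩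

end Aux

/-- In a convergence-admissible calculus, the inductively defined
preorder `≤_Q` and `Q`-similarity coincide. -/
theorem leQ_eq_sim (D : UDC) (hadm : D.admissible) :
    ∀ s1 s2, D.leQ s1 s2 ↔ D.sim s1 s2 := by
  intro s1 s2
  constructor
  · intro h
    refine ⟨D.leQ, ?_, h⟩
    intro x y hxy v1 hv1
    obtain ⟨v2, hv2⟩ := hxy [] (by simp) ⟨v1, hv1⟩
    refine ⟨v2, hv2, ?_⟩
    intro Qf hQf l hl hconv
    -- applyAll l (Qf v1) = applyAll (l ++ [Qf]) v1
    have happ : ∀ (z : D.E), D.applyAll (l ++ [Qf]) z = D.applyAll l (Qf z) := by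
      intro z; simp [UDC.applyAll, List.foldr_append]
    have hlq : ∀ f ∈ l ++ [Qf], f ∈ D.Q := by
      intro f hf
      rcases List.mem_append.mp hf with hf | hf
      · exact hl f hf
      · simp at hf; subst hf; exact hQf
    obtain ⟨a, ha⟩ := hconv
    have ha' : D.convTo (D.applyAll (l ++ [Qf]) x) a := by
      rw [← happ v1] at ha
      exact (D.convTo_applyAll hadm (l ++ [Qf]) hlq hv1 a).mpr ha
    obtain ⟨b, hb⟩ := hxy (l ++ [Qf]) hlq ⟨a, ha'⟩
    refine ⟨b, ?_⟩
    rw [← happ]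
    exact (D.convTo_applyAll hadm (l ++ [Qf]) hlq hv2 b).mp hb
  · intro h l hl hconv
    obtain ⟨v, hv⟩ := hconv
    obtain ⟨w, hw, _⟩ := D.sim_applyAll hadm l hl h hv
    exact ⟨w, hw⟩
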